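/- Let 𝔫 be the 5-dimensional real Lie algebra with orthonormal basis {E₁,…,E₅} and non-zero brackets [E₁,E₂] = m·E₃, [E₁,E₃] = (√3/2)m·E₄, [E₂,E₃] = (√3/2)m·E₅ with m > 0. Then the diagonal endomorphism D defined by D(E₁) = (5/8)m²·E₁, D(E₂) = (5/8)m²·E₂, D(E₃) = (5/4)m²·E₃, D(E₄) = (15/8)m²·E₄, D(E₅) = (15/8)m²·E₅ is a derivation of 𝔫, and Ric = −(3/2)m²·Id + D. -/
import Mathlib


open scoped BigOperators

namespace Nilsoliton15

noncomputable section

abbrev V : Type := Fin 5 → ℝ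

/-- The orthonormal basis vectors E₁,…,E₅ (indexed 0,…,4). -/
def E (i : Fin 5) : V := Pi.single i 1

/-- The inner product making `E` an orthonormal basis. -/
def ip (x y : V) : ℝ := ∑ i, x i * y i

/-- `D` is a derivation of the bracket `br`. -/
def IsDerivation (br : V → V → V) (D : V →ₗ[ℝ] V) : Prop :=
  ∀ X Y : V, D (br X Y) = br (D X) Y + br X (D Y)

/-- `Ric` is the Ricci operator of the nilpotent Lie group with left-invariant
metric determined by the bracket `br` and the orthonormal basis `E`. -/
def IsRicci (br : V → V → V) (Ric : V →ₗ[ℝ] V) : Prop :=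
  ∀ X Y : V, ip (Ric X) Y =
      -(1/2) * (∑ i : Fin 5, ip (br X (E i)) (br Y (E i)))
      + (1/4) * (∑ i : Fin 5, ∑ j : Fin 5, ip (br (E i) (E j)) X * ip (br (E i) (E j)) Y)

/-- The bracket: [E₁,E₂] = m·E₃, [E₁,E₃] = (√3/2)m·E₄, [E₂,E₃] = (√3/2)m·E₅. -/
def br (m : ℝ) (X Y : V) : V :=
  (m * (X 0 * Y 1 - X 1 * Y 0)) • E 2 + ((Real.sqrt 3 / 2) * m * (X 0 * Y 2 - X 2 * Y 0)) • E 3 + ((Real.sqrt 3 / 2) * m * (X 1 * Y 2 - X 2 * Y 1)) • E 4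

lemma decomp (X : V) : X = X 0 • E 0 + X 1 • E 1 + X 2 • E 2 + X 3 • E 3 + X 4 • E 4 := by
  funext k; fin_cases k <;> simp [E, Pi.single_apply]

lemma brk (m : ℝ) (X Y : V) (k : Fin 5) :
    br m X Y k = ![0, 0, m * (X 0 * Y 1 - X 1 * Y 0),
      (Real.sqrt 3 / 2) * m * (X 0 * Y 2 - X 2 * Y 0),
      (Real.sqrt 3 / 2) * m * (X 1 * Y 2 - X 2 * Y 1)] k := by
  fin_cases k <;> simp [br, E, Pi.single_apply]

set_option maxHeartbeats 2000000 in
theorem stmt15 (m : ℝ) (hm : 0 < m)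
    (Ric : V →ₗ[ℝ] V) (hRic : IsRicci (br m) Ric)
    (D : V →ₗ[ℝ] V)
    (hD0 : D (E 0) = ((5/8) * m ^ 2) • E 0)
    (hD1 : D (E 1) = ((5/8) * m ^ 2) • E 1)
    (hD2 : D (E 2) = ((5/4) * m ^ 2) • E 2)
    (hD3 : D (E 3) = ((15/8) * m ^ 2) • E 3)
    (hD4 : D (E 4) = ((15/8) * m ^ 2) • E 4) :
    IsDerivation (br m) D ∧
    Ric = (-(3/2) * m ^ 2) • (LinearMap.id : V →ₗ[ℝ] V) + D := by
  have hs3 : Real.sqrt 3 ^ 2 = 3 := Real.sq_sqrt (by norm_num)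
  have hDX : ∀ (X : V) (k : Fin 5),
      D X k = ![(5:ℝ)/8, 5/8, 5/4, 15/8, 15/8] k * m ^ 2 * X k := by
    intro X k
    conv_lhs => rw [decomp X]
    simp only [map_add, map_smul, hD0, hD1, hD2, hD3, hD4, Pi.add_apply,
      Pi.smul_apply, smul_eq_mul]
    fin_cases k <;> simp [E, Pi.single_apply] <;> ring
  constructor
  · intro X Y
    funext k
    simp only [Pi.add_apply]
    rw [hDX, brk m X Y k, brk, brk]
    fin_cases k <;> simp [hDX] <;> ring
  · apply LinearMap.ext
    intro X
    funext k
    have h := hRic X (E k)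
    have hL : ip (Ric X) (E k) = Ric X k := by
      fin_cases k <;> simp [ip, E, Pi.single_apply, Fin.sum_univ_five]
    rw [hL] at h
    rw [h]
    show _ = ((-(3/2) * m ^ 2) • X + D X) k
    simp only [Pi.add_apply, Pi.smul_apply, smul_eq_mul]
    rw [hDX]
    simp only [ip, Fin.sum_univ_five, brk, E, Pi.single_apply]
    fin_cases k <;>
      · simp
        ring_nf
        simp only [hs3]
        ring

end

end Nilsoliton15
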